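/- arXiv:2201.10098 — 2 statements merged into one kernel-verified Lean document; each statement's English description precedes it below -/
import Mathlib

section
/- Consider the linear difference system ∑_{k=0}^{m-1} d_{m,k} y_k + (d_{m,m} + p_m) y_m = f_m for m = 1,…,M, together with y_0 = μ, where all coefficients satisfy |p_m|, |d_{m,k}| ≤ P. If there exists δ > 0 such that |d_{m,m} + p_m| ≥ ∑_{k=0}^{m-1} |d_{m,k}| + δ for every m = 1,…,M, then the system has a unique solution {y_m}, and this solution satisfies |y_m| ≤ max{ |μ|, (1/δ) max_{1≤k≤m} |f_k| } for all m = 0,…,M. -/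
noncomputable def Ysol (d : ℕ → ℕ → ℝ) (p f : ℕ → ℝ) (μ : ℝ) : ℕ → ℕ → ℝ
  | 0 => fun _ => μ
  | (m+1) => Function.update (Ysol d p f μ m) (m+1)
      ((f (m+1) - ∑ k ∈ Finset.range (m+1), d (m+1) k * Ysol d p f μ m k)
        / (d (m+1) (m+1) + p (m+1)))

lemma Ysol_eq (d : ℕ → ℕ → ℝ) (p f : ℕ → ℝ) (μ : ℝ) :
    ∀ m k, k ≤ m → Ysol d p f μ m k = Ysol d p f μ k k := by
  intro m
  induction m with
  | zero => intro k hk; obtain rfl := Nat.le_zero.mp hk; rfl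
  | succ n ih =>
    intro k hk
    rcases Nat.eq_or_lt_of_le hk with h | h
    · subst h; rfl
    · have hk' : k ≤ n := Nat.lt_succ_iff.mp h
      have h1 : Ysol d p f μ (n+1) k = Ysol d p f μ n k := by
        show Function.update (Ysol d p f μ n) (n+1) _ k = _
        exact Function.update_of_ne (by omega) _ _
      rw [h1, ih k hk']

/-- under strict diagonal dominance with margin δ, the difference system
has a unique solution, and the solution satisfies
|y_m| ≤ max{|μ|, (1/δ) max_{1≤k≤m} |f_k|}. -/
theorem well_conditioned_difference_system
    (M : ℕ) (d : ℕ → ℕ → ℝ) (p f : ℕ → ℝ) (μ P δ : ℝ)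
    (hP : ∀ m ≤ M, |p m| ≤ P)
    (hd : ∀ m ≤ M, ∀ k ≤ m, |d m k| ≤ P)
    (hδ : 0 < δ)
    (hdom : ∀ m, 1 ≤ m → m ≤ M →
      ∑ k ∈ Finset.range m, |d m k| + δ ≤ |d m m + p m|) :
    ∃ y : ℕ → ℝ,
      (y 0 = μ ∧
        (∀ m, 1 ≤ m → m ≤ M →
          ∑ k ∈ Finset.range m, d m k * y k + (d m m + p m) * y m = f m) ∧
        (∀ m ≤ M, |y m| ≤ max |μ| ((1 / δ) * ⨆ k ∈ Finset.Icc 1 m, |f k|))) ∧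
      ∀ z : ℕ → ℝ, z 0 = μ →
        (∀ m, 1 ≤ m → m ≤ M →
          ∑ k ∈ Finset.range m, d m k * z k + (d m m + p m) * z m = f m) →
        ∀ m ≤ M, z m = y m := by
  -- The solution
  set y : ℕ → ℝ := fun k => Ysol d p f μ k k with hy
  have hy0 : y 0 = μ := rfl
  -- diagonal nonzero
  have hDpos : ∀ m, 1 ≤ m → m ≤ M → (0:ℝ) < |d m m + p m| := by
    intro m h1 h2
    have := hdom m h1 h2
    have hS : (0:ℝ) ≤ ∑ k ∈ Finset.range m, |d m k| :=
      Finset.sum_nonneg fun k _ => abs_nonneg _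
    linarith
  have hDne : ∀ m, 1 ≤ m → m ≤ M → d m m + p m ≠ 0 := by
    intro m h1 h2
    exact abs_pos.mp (hDpos m h1 h2)
  -- the equations
  have heq : ∀ m, 1 ≤ m → m ≤ M →
      ∑ k ∈ Finset.range m, d m k * y k + (d m m + p m) * y m = f m := by
    intro m h1 h2
    obtain ⟨n, rfl⟩ : ∃ n, m = n + 1 := ⟨m - 1, by omega⟩
    have hval : y (n+1) =
        (f (n+1) - ∑ k ∈ Finset.range (n+1), d (n+1) k * Ysol d p f μ n k)
          / (d (n+1) (n+1) + p (n+1)) := by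
      show Function.update (Ysol d p f μ n) (n+1) _ (n+1) = _
      simp
    have hsum : ∑ k ∈ Finset.range (n+1), d (n+1) k * Ysol d p f μ n k
        = ∑ k ∈ Finset.range (n+1), d (n+1) k * y k := by
      refine Finset.sum_congr rfl fun k hk => ?_
      rw [Ysol_eq d p f μ n k (Nat.lt_succ_iff.mp (Finset.mem_range.mp hk))]
    rw [hsum] at hval
    have hD := hDne (n+1) h1 h2
    rw [hval]
    field_simp
    ring
  -- the sup function
  set T : ℕ → ℝ := fun m => ⨆ k ∈ Finset.Icc 1 m, |f k| with hT
  have hbd : ∀ m (j : ℕ), (⨆ _ : j ∈ Finset.Icc 1 m, |f j|) ≤ ∑ i ∈ Finset.Icc 1 m, |f i| := by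
    intro m j
    by_cases hj : j ∈ Finset.Icc 1 m
    · rw [ciSup_pos hj]
      exact Finset.single_le_sum (fun i _ => abs_nonneg (f i)) hj
    · haveI : IsEmpty (j ∈ Finset.Icc 1 m) := isEmpty_Prop.mpr hj
      rw [Real.iSup_of_isEmpty _]
      exact Finset.sum_nonneg fun i _ => abs_nonneg _
  have hbdd : ∀ m, BddAbove (Set.range fun j : ℕ => ⨆ _ : j ∈ Finset.Icc 1 m, |f j|) := by
    intro m
    exact ⟨∑ i ∈ Finset.Icc 1 m, |f i|, by rintro x ⟨j, rfl⟩; exact hbd m j⟩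
  have hT0 : ∀ m, 0 ≤ T m := by
    intro m
    have h0 : (0:ℕ) ∉ Finset.Icc 1 m := by simp
    haveI : IsEmpty ((0:ℕ) ∈ Finset.Icc 1 m) := isEmpty_Prop.mpr h0
    have h2 : (⨆ _ : (0:ℕ) ∈ Finset.Icc 1 m, |f 0|) ≤ T m := le_ciSup (hbdd m) 0
    rwa [Real.iSup_of_isEmpty _] at h2
  have hfT : ∀ m k, k ∈ Finset.Icc 1 m → |f k| ≤ T m := by
    intro m k hk
    have : (⨆ _ : k ∈ Finset.Icc 1 m, |f k|) ≤ T m := le_ciSup (hbdd m) k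
    rwa [ciSup_pos hk] at this
  have hTmono : ∀ k m, k ≤ m → T k ≤ T m := by
    intro k m hkm
    refine ciSup_le fun j => ?_
    by_cases hj : j ∈ Finset.Icc 1 k
    · rw [ciSup_pos hj]
      refine hfT m j ?_
      simp only [Finset.mem_Icc] at hj ⊢
      omega
    · haveI : IsEmpty (j ∈ Finset.Icc 1 k) := isEmpty_Prop.mpr hj
      rw [Real.iSup_of_isEmpty _]
      exact hT0 m
  -- bound function
  set B : ℕ → ℝ := fun m => max |μ| ((1 / δ) * T m) with hB
  have hBmono : ∀ k m, k ≤ m → B k ≤ B m := by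
    intro k m hkm
    exact max_le_max le_rfl (by
      have := hTmono k m hkm
      have h1 : (0:ℝ) ≤ 1 / δ := by positivity
      nlinarith)
  have hB0 : ∀ m, 0 ≤ B m := fun m => le_trans (abs_nonneg μ) (le_max_left _ _)
  -- main bound by strong induction
  have hbound : ∀ m, m ≤ M → |y m| ≤ B m := by
    intro m
    induction m using Nat.strong_induction_on with
    | _ m ih =>
      intro hmM
      rcases Nat.eq_zero_or_pos m with rfl | h1
      · rw [hy0]; exact le_max_left _ _
      · have hD := hDpos m h1 hmM
        have heqm := heq m h1 hmM
        have hDy : (d m m + p m) * y m = f m - ∑ k ∈ Finset.range m, d m k * y k := by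
          linarith
        have habs : |d m m + p m| * |y m| ≤ |f m| + ∑ k ∈ Finset.range m, |d m k| * |y k| := by
          rw [← abs_mul, hDy]
          calc |f m - ∑ k ∈ Finset.range m, d m k * y k|
              ≤ |f m| + |∑ k ∈ Finset.range m, d m k * y k| := abs_sub _ _
            _ ≤ |f m| + ∑ k ∈ Finset.range m, |d m k * y k| := by
                gcongr; exact Finset.abs_sum_le_sum_abs _ _
            _ = |f m| + ∑ k ∈ Finset.range m, |d m k| * |y k| := by
                simp [abs_mul]
        have hsumB : ∑ k ∈ Finset.range m, |d m k| * |y k|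
            ≤ (∑ k ∈ Finset.range m, |d m k|) * B m := by
          rw [Finset.sum_mul]
          refine Finset.sum_le_sum fun k hk => ?_
          have hkm : k < m := Finset.mem_range.mp hk
          have := ih k hkm (by omega)
          have := hBmono k m (Nat.le_of_lt hkm)
          have := abs_nonneg (d m k)
          nlinarith [abs_nonneg (y k)]
        have hfB : |f m| ≤ δ * B m := by
          have h2 : |f m| ≤ T m := hfT m m (by simp [Finset.mem_Icc]; omega)
          have h3 : (1 / δ) * T m ≤ B m := le_max_right _ _
          have h4 : δ * ((1/δ) * T m) = T m := by field_simp
          have : T m ≤ δ * B m := by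
            nlinarith [mul_le_mul_of_nonneg_left h3 hδ.le]
          linarith
        have hSδ : (∑ k ∈ Finset.range m, |d m k|) + δ ≤ |d m m + p m| := hdom m h1 hmM
        have key : |d m m + p m| * |y m| ≤ |d m m + p m| * B m := by
          have hBm := hB0 m
          calc |d m m + p m| * |y m| ≤ |f m| + ∑ k ∈ Finset.range m, |d m k| * |y k| := habs
            _ ≤ δ * B m + (∑ k ∈ Finset.range m, |d m k|) * B m := by linarith
            _ = ((∑ k ∈ Finset.range m, |d m k|) + δ) * B m := by ring
            _ ≤ |d m m + p m| * B m := by nlinarith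
        exact le_of_mul_le_mul_left key hD
  refine ⟨y, ⟨hy0, heq, fun m hm => hbound m hm⟩, ?_⟩
  -- uniqueness
  intro z hz0 hzeq m
  induction m using Nat.strong_induction_on with
  | _ m ih =>
    intro hmM
    rcases Nat.eq_zero_or_pos m with rfl | h1
    · rw [hz0, hy0]
    · have hD := hDne m h1 hmM
      have h1' := hzeq m h1 hmM
      have h2' := heq m h1 hmM
      have hsum : ∑ k ∈ Finset.range m, d m k * z k = ∑ k ∈ Finset.range m, d m k * y k := by
        refine Finset.sum_congr rfl fun k hk => ?_
        rw [ih k (Finset.mem_range.mp hk) (by have := Finset.mem_range.mp hk; omega)]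
      have : (d m m + p m) * z m = (d m m + p m) * y m := by
        rw [hsum] at h1'; linarith
      exact mul_left_cancel₀ hD this
end

section
/- Suppose the coefficients of the difference system satisfy, uniformly in m and M, the conditions (|d_{m,m}+p_m| − ∑_{k<m}|d_{m,k}|)/(|d_{m,m}+p_m| + ∑_{k<m}|d_{m,k}|) ≥ A > 0 and max{|d_{m,m}+p_m|, ∑_{k<m}|d_{m,k}|} ≥ B > 0. Then the strict dominance condition |d_{m,m}+p_m| ≥ ∑_{k<m}|d_{m,k}| + δ holds with δ = A·B, and the solution satisfies |y_m| ≤ max{|μ|, (1/(A·B)) max_k |f_k|}. -/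
private lemma biSup_le_sum' (g : ℕ → ℝ) (hg : ∀ k, 0 ≤ g k) (s : Finset ℕ) (k : ℕ) :
    (⨆ _ : k ∈ s, g k) ≤ ∑ j ∈ s, g j := by
  by_cases hk : k ∈ s
  · rw [ciSup_pos hk]
    exact Finset.single_le_sum (fun j _ => hg j) hk
  · haveI : IsEmpty (k ∈ s) := ⟨hk⟩
    rw [Real.iSup_of_isEmpty]
    exact Finset.sum_nonneg fun j _ => hg j

private lemma bdd_biSup' (g : ℕ → ℝ) (hg : ∀ k, 0 ≤ g k) (s : Finset ℕ) :
    BddAbove (Set.range fun k => ⨆ _ : k ∈ s, g k) :=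
  ⟨∑ j ∈ s, g j, by rintro x ⟨k, rfl⟩; exact biSup_le_sum' g hg s k⟩

private lemma iSup_prop_nonneg (P : Prop) (a : ℝ) (ha : 0 ≤ a) : 0 ≤ ⨆ _ : P, a := by
  by_cases h : P
  · rw [ciSup_pos h]; exact ha
  · haveI : IsEmpty P := ⟨h⟩; rw [Real.iSup_of_isEmpty]

private lemma le_biSup' (g : ℕ → ℝ) (hg : ∀ k, 0 ≤ g k) (s : Finset ℕ) (k : ℕ)
    (hk : k ∈ s) : g k ≤ ⨆ j ∈ s, g j := by
  have h1 : (⨆ _ : k ∈ s, g k) = g k := ciSup_pos hk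
  rw [← h1]
  exact le_ciSup (bdd_biSup' g hg s) k

private lemma biSup_nonneg' (g : ℕ → ℝ) (hg : ∀ k, 0 ≤ g k) (m : ℕ) :
    0 ≤ ⨆ j ∈ Finset.Icc 1 m, g j := by
  have h0 : (0 : ℕ) ∉ Finset.Icc 1 m := by simp
  haveI : IsEmpty ((0:ℕ) ∈ Finset.Icc 1 m) := ⟨h0⟩
  have h1 : (0:ℝ) = ⨆ _ : (0:ℕ) ∈ Finset.Icc 1 m, g 0 := (Real.iSup_of_isEmpty _).symm
  rw [h1]
  exact le_ciSup (bdd_biSup' g hg _) 0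

private lemma biSup_mono' (g : ℕ → ℝ) (hg : ∀ k, 0 ≤ g k) {m n : ℕ} (hmn : m ≤ n) :
    (⨆ j ∈ Finset.Icc 1 m, g j) ≤ ⨆ j ∈ Finset.Icc 1 n, g j := by
  refine ciSup_mono (bdd_biSup' g hg _) fun k => ?_
  by_cases hk : k ∈ Finset.Icc 1 m
  · have hk' : k ∈ Finset.Icc 1 n :=
      Finset.mem_Icc.2 ⟨(Finset.mem_Icc.1 hk).1, le_trans (Finset.mem_Icc.1 hk).2 hmn⟩
    rw [ciSup_pos hk, ciSup_pos hk']
  · haveI : IsEmpty (k ∈ Finset.Icc 1 m) := ⟨hk⟩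
    rw [Real.iSup_of_isEmpty]
    exact iSup_prop_nonneg _ _ (hg k)

/-- the alternative sufficient condition with constants A, B implies
strict diagonal dominance with δ = A·B, and solutions satisfy the corresponding bound. -/
theorem alternative_well_conditioning
    (M : ℕ) (d : ℕ → ℕ → ℝ) (p f : ℕ → ℝ) (μ A B : ℝ)
    (hA : 0 < A) (hB : 0 < B)
    (hratio : ∀ m, 1 ≤ m → m ≤ M →
      A ≤ (|d m m + p m| - ∑ k ∈ Finset.range m, |d m k|) /
            (|d m m + p m| + ∑ k ∈ Finset.range m, |d m k|))
    (hmax : ∀ m, 1 ≤ m → m ≤ M →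
      B ≤ max |d m m + p m| (∑ k ∈ Finset.range m, |d m k|)) :
    (∀ m, 1 ≤ m → m ≤ M →
      ∑ k ∈ Finset.range m, |d m k| + A * B ≤ |d m m + p m|) ∧
    ∀ y : ℕ → ℝ, y 0 = μ →
      (∀ m, 1 ≤ m → m ≤ M →
        ∑ k ∈ Finset.range m, d m k * y k + (d m m + p m) * y m = f m) →
      ∀ m ≤ M, |y m| ≤ max |μ| ((1 / (A * B)) * ⨆ k ∈ Finset.Icc 1 m, |f k|) := by
  have hδ : 0 < A * B := mul_pos hA hB
  have hg : ∀ k, 0 ≤ |f k| := fun k => abs_nonneg _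
  have part1 : ∀ m, 1 ≤ m → m ≤ M →
      ∑ k ∈ Finset.range m, |d m k| + A * B ≤ |d m m + p m| := by
    intro m h1 hm
    set D := |d m m + p m| with hD
    set S := ∑ k ∈ Finset.range m, |d m k| with hS
    have hSnn : 0 ≤ S := Finset.sum_nonneg fun k _ => abs_nonneg _
    have hDnn : 0 ≤ D := abs_nonneg _
    have hmaxle : max D S ≤ D + S :=
      max_le (le_add_of_nonneg_right hSnn) (le_add_of_nonneg_left hDnn)
    have hDS : 0 < D + S := lt_of_lt_of_le hB (le_trans (hmax m h1 hm) hmaxle)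
    have hr := hratio m h1 hm
    have h1' : A * (D + S) ≤ D - S := (le_div_iff₀ hDS).1 hr
    have h2' : A * B ≤ A * (D + S) :=
      mul_le_mul_of_nonneg_left (le_trans (hmax m h1 hm) hmaxle) hA.le
    linarith
  refine ⟨part1, ?_⟩
  intro y hy0 heq m
  induction m using Nat.strong_induction_on with
  | _ m ih =>
    intro hmM
    rcases Nat.eq_zero_or_pos m with rfl | hm1
    · rw [hy0]; exact le_max_left _ _
    · set F : ℕ → ℝ := fun n => ⨆ k ∈ Finset.Icc 1 n, |f k| with hF
      set K : ℝ := max |μ| ((1 / (A * B)) * F m) with hK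
      have hKnn : 0 ≤ K := le_trans (abs_nonneg μ) (le_max_left _ _)
      have hIH : ∀ k, k < m → |y k| ≤ K := by
        intro k hk
        refine le_trans (ih k hk (le_trans hk.le hmM)) (max_le (le_max_left _ _) ?_)
        refine le_trans ?_ (le_max_right _ _)
        exact mul_le_mul_of_nonneg_left (biSup_mono' _ hg hk.le) (by positivity)
      set D := d m m + p m with hDdef
      set S := ∑ k ∈ Finset.range m, |d m k| with hS
      have hSnn : 0 ≤ S := Finset.sum_nonneg fun k _ => abs_nonneg _
      have hdom : S + A * B ≤ |D| := part1 m hm1 hmM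
      have heqm := heq m hm1 hmM
      have hDy : D * y m = f m - ∑ k ∈ Finset.range m, d m k * y k := by
        rw [hDdef]; linarith
      have hfm : |f m| ≤ A * B * K := by
        have h1 : |f m| ≤ F m := le_biSup' _ hg _ m (Finset.mem_Icc.2 ⟨hm1, le_rfl⟩)
        have h2 : (1 / (A * B)) * F m ≤ K := le_max_right _ _
        have h3 : F m ≤ A * B * K := by
          have h4 := mul_le_mul_of_nonneg_left h2 hδ.le
          calc F m = A * B * (1 / (A * B) * F m) := by field_simp
            _ ≤ A * B * K := h4
        linarith
      have hsum : |∑ k ∈ Finset.range m, d m k * y k| ≤ S * K := by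
        calc |∑ k ∈ Finset.range m, d m k * y k|
            ≤ ∑ k ∈ Finset.range m, |d m k * y k| := Finset.abs_sum_le_sum_abs _ _
          _ ≤ ∑ k ∈ Finset.range m, |d m k| * K := by
              refine Finset.sum_le_sum fun k hk => ?_
              rw [abs_mul]
              exact mul_le_mul_of_nonneg_left (hIH k (Finset.mem_range.1 hk)) (abs_nonneg _)
          _ = S * K := by rw [hS, Finset.sum_mul]
      have hbound : |D| * |y m| ≤ (S + A * B) * K := by
        rw [← abs_mul, hDy]
        calc |f m - ∑ k ∈ Finset.range m, d m k * y k|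
            ≤ |f m| + |∑ k ∈ Finset.range m, d m k * y k| := abs_sub _ _
          _ ≤ A * B * K + S * K := add_le_add hfm hsum
          _ = (S + A * B) * K := by ring
      have hpos : 0 < S + A * B := by positivity
      have : (S + A * B) * |y m| ≤ (S + A * B) * K := by
        refine le_trans ?_ hbound
        exact mul_le_mul_of_nonneg_right hdom (abs_nonneg _)
      exact le_of_mul_le_mul_left this hpos
end
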